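/- Let R be a valuation domain, L a prime ideal of R, and A a proper ideal of R_L. If R/A is complete in the R/A-topology, then R_L/A is complete in the R_L/A-topology. -/

import Mathlib

open Pointwise

section Defs
universe u v
variable (R : Type u) [CommRing R]

/-- `U` is a pure submodule of its ambient module: `rU = U ∩ rM` for all `r`. -/
def IsPureSub {M : Type v} [AddCommGroup M] [Module R M] (U : Submodule R M) : Prop :=
  ∀ (r : R) (x : M), x ∈ U → (∃ m : M, r • m = x) → ∃ u ∈ U, r • u = x

/-- `U` is uniserial: its submodules are totally ordered by inclusion. -/
def IsUniserialSub {M : Type v} [AddCommGroup M] [Module R M] (U : Submodule R M) : Prop :=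
  ∀ A B : Submodule R ↥U, A ≤ B ∨ B ≤ A

/-- `U` is a direct summand of its ambient module. -/
def IsSummand {M : Type v} [AddCommGroup M] [Module R M] (U : Submodule R M) : Prop :=
  ∃ V : Submodule R M, IsCompl U V

/-- A (torsion-free) module is separable if every pure uniserial submodule is a summand. -/
def IsSeparableMod (M : Type v) [AddCommGroup M] [Module R M] : Prop :=
  ∀ U : Submodule R M, IsPureSub R U → IsUniserialSub R U → IsSummand R U

/-- `R/A` is complete in the `R/A`-topology: every coherent family of cosets
`(aᵢ + Bᵢ)` with `⋂ᵢ Bᵢ = A` has a common point. -/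
def IsCompleteQuot (A : Ideal R) : Prop :=
  ∀ (ι : Type u) (a : ι → R) (B : ι → Ideal R),
    (∀ i, A ≤ B i) → (∀ i j, B i ≤ B j → a i - a j ∈ B j) → (⨅ i, B i) = A →
    ∃ c : R, ∀ i, c - a i ∈ B i

/-- A valuation ring with maximal ideal `P` is maximal: `R/A` is complete in the
`R/A`-topology for every proper ideal `A` with `A ≠ Pa` for all nonzero `a`. -/
def IsMaximalVD (P : Ideal R) : Prop :=
  ∀ A : Ideal R, A ≠ ⊤ → (∀ a : R, a ≠ 0 → A ≠ Ideal.span {a} * P) → IsCompleteQuot R A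

/-- A module `M` is slender if every homomorphism `R^ℕ → M` kills almost all
standard unit vectors. -/
def IsSlender (M : Type v) [AddCommGroup M] [Module R M] : Prop :=
  ∀ f : ((ℕ → R) →ₗ[R] M), ∃ n₀ : ℕ, ∀ n ≥ n₀, f (Pi.single n 1) = 0

end Defs

section Aux
universe u

section Aux
variable {R : Type u} [CommRing R] [IsDomain R] [ValuationRing R]
  (L : Ideal R) [L.IsPrime]

local notation "RL" => Localization.AtPrime L
local notation "φ" => algebraMap R (Localization.AtPrime L)

lemma aux_domain : IsDomain (Localization.AtPrime L) :=
  IsLocalization.isDomain_of_local_atPrime inferInstance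

/-- Every element of a proper ideal of `R_L` comes from `R`. -/
lemma aux_mem_image {B : Ideal (Localization.AtPrime L)} (hB : B ≠ ⊤)
    {x : Localization.AtPrime L} (hx : x ∈ B) : ∃ r : R, φ r = x := by
  haveI := aux_domain L
  obtain ⟨⟨r, s⟩, hs⟩ := IsLocalization.surj L.primeCompl x
  have hu : IsUnit (φ (s : R)) := IsLocalization.map_units _ s
  rcases ValuationRing.dvd_total (s : R) r with ⟨c, hc⟩ | ⟨c, hc⟩
  · refine ⟨c, ?_⟩
    have : x * φ (s : R) = φ (s : R) * φ c := by rw [hs, hc, map_mul]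
    exact (hu.mul_left_cancel (by rw [mul_comm]; exact this)).symm
  · -- r * c = s, so x is zero or a unit
    by_cases hr : φ r = 0
    · refine ⟨0, ?_⟩
      rw [map_zero]
      have : x * φ (s : R) = 0 := by rw [hs, hr]
      rcases mul_eq_zero.mp this with h | h
      · exact h.symm
      · exact absurd h hu.ne_zero
    · exfalso
      apply hB
      have key : (x * φ c) * φ r = 1 * φ r := by
        rw [one_mul, mul_assoc, mul_comm (φ c) (φ r), ← map_mul, ← hc]; exact hs
      have : x * φ c = 1 := mul_right_cancel₀ hr key
      exact Ideal.eq_top_of_isUnit_mem B hx (IsUnit.of_mul_eq_one _ this)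

/-- Divisibility is total in `R_L`. -/
lemma aux_dvd_total (x y : Localization.AtPrime L) : x ∣ y ∨ y ∣ x := by
  haveI := aux_domain L
  obtain ⟨⟨r, s⟩, hs⟩ := IsLocalization.surj L.primeCompl x
  obtain ⟨⟨u, t⟩, ht⟩ := IsLocalization.surj L.primeCompl y
  have hus : IsUnit (φ (s : R)) := IsLocalization.map_units _ s
  have hut : IsUnit (φ (t : R)) := IsLocalization.map_units _ t
  rcases ValuationRing.dvd_total (r * (t : R)) (u * (s : R)) with ⟨c, hc⟩ | ⟨c, hc⟩
  · left
    refine ⟨φ c, ?_⟩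
    have key : y * (φ (t : R) * φ (s : R)) = (x * φ c) * (φ (t : R) * φ (s : R)) := by
      calc y * (φ (t : R) * φ (s : R)) = (y * φ (t : R)) * φ (s : R) := by ring
        _ = φ (u * (s : R)) := by rw [ht, map_mul]
        _ = φ (r * (t : R)) * φ c := by rw [← map_mul, hc]
        _ = (x * φ (s : R)) * φ (t : R) * φ c := by rw [hs, map_mul]
        _ = (x * φ c) * (φ (t : R) * φ (s : R)) := by ring
    exact mul_right_cancel₀ (hut.mul hus).ne_zero key
  · right
    refine ⟨φ c, ?_⟩
    have key : x * (φ (s : R) * φ (t : R)) = (y * φ c) * (φ (s : R) * φ (t : R)) := by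
      calc x * (φ (s : R) * φ (t : R)) = (x * φ (s : R)) * φ (t : R) := by ring
        _ = φ (r * (t : R)) := by rw [hs, map_mul]
        _ = φ (u * (s : R)) * φ c := by rw [← map_mul, hc]
        _ = (y * φ (t : R)) * φ (s : R) * φ c := by rw [ht, map_mul]
        _ = (y * φ c) * (φ (s : R) * φ (t : R)) := by ring
    exact mul_right_cancel₀ (hus.mul hut).ne_zero key

/-- Ideals of `R_L` are totally ordered. -/
lemma aux_ideal_total (B C : Ideal (Localization.AtPrime L)) : B ≤ C ∨ C ≤ B := by
  by_cases hBC : B ≤ C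
  · exact Or.inl hBC
  · right
    obtain ⟨x, hxB, hxC⟩ := Set.not_subset.mp hBC
    intro y hy
    rcases aux_dvd_total L x y with ⟨c, rfl⟩ | ⟨c, rfl⟩
    · exact Ideal.mul_mem_right _ _ hxB
    · exact absurd (Ideal.mul_mem_right _ _ hy) hxC

end Aux

/-- if `A` is a proper ideal of `R_L` and `R/A` is complete in the
`R/A`-topology, then `R_L/A` is complete in the `R_L/A`-topology. -/
theorem stmt_7 {R : Type u} [CommRing R] [IsDomain R] [ValuationRing R]
    (L : Ideal R) [L.IsPrime] (A : Ideal (Localization.AtPrime L)) (hA : A ≠ ⊤)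
    (h : IsCompleteQuot R (A.comap (algebraMap R (Localization.AtPrime L)))) :
    IsCompleteQuot (Localization.AtPrime L) A := by
  haveI := aux_domain L
  intro ι a B hAB hcoh hinf
  set φ := algebraMap R (Localization.AtPrime L) with hφ
  have hι : ∃ i0, B i0 ≠ ⊤ := by
    by_contra hcon
    push_neg at hcon
    exact hA (by rw [← hinf]; simp [hcon])
  obtain ⟨i0, hi0⟩ := hι
  -- restrict to indices below i0
  have hrep : ∀ i : {i : ι // B i ≤ B i0}, ∃ r : R, φ r = a i.1 - a i0 :=
    fun i => aux_mem_image L hi0 (hcoh i.1 i0 i.2)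
  choose aa haa using hrep
  set B' : {i : ι // B i ≤ B i0} → Ideal R := fun i => (B i.1).comap φ with hB'
  -- order reflection
  have hrefl : ∀ i j : ι, (B i).comap φ ≤ (B j).comap φ → B i ≤ B j := by
    intro i j hij
    calc B i = Ideal.map φ ((B i).comap φ) :=
          (IsLocalization.map_comap L.primeCompl _ (B i)).symm
      _ ≤ Ideal.map φ ((B j).comap φ) := Ideal.map_mono hij
      _ = B j := IsLocalization.map_comap L.primeCompl _ (B j)
  -- restricted infimum
  have hinf₁ : (⨅ i : {i : ι // B i ≤ B i0}, B i.1) = A := by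
    refine le_antisymm ?_ (le_iInf fun i => hAB i.1)
    rw [← hinf]
    refine le_iInf fun j => ?_
    rcases aux_ideal_total L (B j) (B i0) with hle | hge
    · exact iInf_le (fun i : {i : ι // B i ≤ B i0} => B i.1) ⟨j, hle⟩
    · exact le_trans (iInf_le _ ⟨i0, le_rfl⟩) hge
  obtain ⟨c, hc⟩ := h {i : ι // B i ≤ B i0} aa B'
    (fun i => Ideal.comap_mono (hAB i.1))
    (by
      intro i j hij
      have hBij : B i.1 ≤ B j.1 := hrefl _ _ hij
      have : φ (aa i - aa j) ∈ B j.1 := by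
        rw [map_sub, haa, haa]
        have : a i.1 - a i0 - (a j.1 - a i0) = a i.1 - a j.1 := by ring
        rw [this]
        exact hcoh i.1 j.1 hBij
      exact this)
    (by rw [hB', ← Ideal.comap_iInf, hinf₁])
  refine ⟨φ c + a i0, fun i => ?_⟩
  rcases aux_ideal_total L (B i) (B i0) with hle | hge
  · have hci := hc ⟨i, hle⟩
    have : φ c + a i0 - a i = φ (c - aa ⟨i, hle⟩) := by
      rw [map_sub, haa]; ring
    rw [this]
    exact hci
  · have hci0 := hc ⟨i0, le_rfl⟩
    have h0 : φ (aa ⟨i0, le_rfl⟩) = 0 := by rw [haa]; ring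
    have hφc : φ c ∈ B i0 := by
      have : φ c = φ (c - aa ⟨i0, le_rfl⟩) := by rw [map_sub, h0, sub_zero]
      rw [this]
      exact hci0
    have : φ c + a i0 - a i = φ c + (a i0 - a i) := by ring
    rw [this]
    exact Ideal.add_mem _ (hge hφc) (hcoh i0 i hge)
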